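/- Let E be a nonzero finite-dimensional complex inner product space, T : E → E a self-adjoint linear map, and μ an eigenvalue of T with μ ≠ 0. Let r ≥ 0 be a real number such that |ν| ≤ r for every eigenvalue ν of T with ν ≠ μ, and let P denote the orthogonal projection of E onto the eigenspace ker(T − μ·id). Then for every ψ ∈ E and every natural number n, ‖μ^{−n} • T^n ψ − P ψ‖ ≤ (r/|μ|)^n · ‖ψ‖. -/

import Mathlib

open Filter Module

private lemma euclid_norm_le {N : ℕ} (x y : EuclideanSpace ℂ (Fin N)) (C : ℝ) (hC : 0 ≤ C)
    (h : ∀ i, ‖x i‖ ≤ C * ‖y i‖) : ‖x‖ ≤ C * ‖y‖ := by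
  rw [EuclideanSpace.norm_eq, EuclideanSpace.norm_eq]
  calc Real.sqrt (∑ i, ‖x i‖ ^ 2) ≤ Real.sqrt (∑ i, C ^ 2 * ‖y i‖ ^ 2) := by
        apply Real.sqrt_le_sqrt
        apply Finset.sum_le_sum
        intro i _
        rw [← mul_pow]
        exact pow_le_pow_left₀ (norm_nonneg _) (h i) 2
    _ = C * Real.sqrt (∑ i, ‖y i‖ ^ 2) := by
        rw [← Finset.mul_sum, Real.sqrt_mul (by positivity), Real.sqrt_sq hC]

theorem power_iteration_rate
    {E : Type*} [NormedAddCommGroup E] [InnerProductSpace ℂ E]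
    [FiniteDimensional ℂ E] [Nontrivial E]
    (T : Module.End ℂ E) (hT : LinearMap.IsSymmetric T)
    (μ : ℂ) (hμ : Module.End.HasEigenvalue T μ) (hμ0 : μ ≠ 0)
    (r : ℝ) (hr : 0 ≤ r)
    (hbound : ∀ ν : ℂ, Module.End.HasEigenvalue T ν → ν ≠ μ → ‖ν‖ ≤ r)
    (ψ : E) (n : ℕ) :
    ‖(μ ^ n)⁻¹ • ((T ^ n) ψ) -
        ((Submodule.orthogonalProjectionOnto (Module.End.eigenspace T μ) ψ : E))‖ ≤
      (r / ‖μ‖) ^ n * ‖ψ‖ := by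
  classical
  have hrank : Module.finrank ℂ E = Module.finrank ℂ E := rfl
  set b := hT.eigenvectorBasis hrank with hb
  set lam := hT.eigenvalues hrank with hlam
  -- coordinates of T applied
  have hT1 : ∀ (w : E) (i), b.repr (T w) i = (lam i : ℂ) * b.repr w i := fun w i =>
    hT.eigenvectorBasis_apply_self_apply hrank w i
  have hTn : ∀ (m : ℕ) (w : E) (i), b.repr ((T ^ m) w) i = (lam i : ℂ) ^ m * b.repr w i := by
    intro m
    induction m with
    | zero => intro w i; simp
    | succ m ih =>
      intro w i
      rw [pow_succ, Module.End.mul_apply, ih, hT1, pow_succ]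
      ring
  -- the candidate projection
  set v : E := b.repr.symm (WithLp.toLp 2 (fun i => if (lam i : ℂ) = μ then b.repr ψ i else 0)) with hv
  have hvrepr : ∀ i, b.repr v i = if (lam i : ℂ) = μ then b.repr ψ i else 0 := by
    intro i
    simp only [hv, LinearIsometryEquiv.apply_symm_apply, WithLp.ofLp_toLp]
  have hvmem : v ∈ Module.End.eigenspace T μ := by
    rw [Module.End.mem_eigenspace_iff]
    apply b.repr.injective
    ext i
    rw [hT1, map_smul]
    simp only [PiLp.smul_apply, smul_eq_mul, hvrepr]
    by_cases h : (lam i : ℂ) = μ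
    · simp [h]
    · simp [h]
  have horth : ψ - v ∈ (Module.End.eigenspace T μ)ᗮ := by
    rw [Submodule.mem_orthogonal]
    intro w hw
    rw [Module.End.mem_eigenspace_iff] at hw
    have hw' : ∀ i, (lam i : ℂ) ≠ μ → b.repr w i = 0 := by
      intro i hne
      have := congrArg (fun z => b.repr z i) hw
      simp only [hT1, map_smul, PiLp.smul_apply, smul_eq_mul] at this
      by_contra h0
      exact hne (mul_right_cancel₀ h0 this)
    rw [← b.repr.inner_map_map w (ψ - v)]
    rw [PiLp.inner_apply]
    apply Finset.sum_eq_zero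
    intro i _
    by_cases h : (lam i : ℂ) = μ
    · simp [map_sub, hvrepr, h]
    · simp [hw' i h]
  have hP : (Submodule.orthogonalProjectionOnto (Module.End.eigenspace T μ) ψ : E) = v :=
    Submodule.eq_starProjection_of_mem_orthogonal hvmem horth
  rw [hP]
  -- now estimate coordinatewise
  have hμn : (μ : ℂ) ^ n ≠ 0 := pow_ne_zero _ hμ0
  have hμpos : 0 < ‖μ‖ := norm_pos_iff.mpr hμ0
  have key : ∀ i, ‖b.repr ((μ ^ n)⁻¹ • (T ^ n) ψ - v) i‖ ≤
      (r / ‖μ‖) ^ n * ‖b.repr ψ i‖ := by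
    intro i
    have hrepr : b.repr ((μ ^ n)⁻¹ • (T ^ n) ψ - v) i =
        (μ ^ n)⁻¹ * ((lam i : ℂ) ^ n * b.repr ψ i) -
          (if (lam i : ℂ) = μ then b.repr ψ i else 0) := by
      rw [map_sub, map_smul]
      simp only [PiLp.sub_apply, PiLp.smul_apply, smul_eq_mul, hTn n ψ i, hvrepr]
    rw [hrepr]
    by_cases h : (lam i : ℂ) = μ
    · rw [h]
      rw [if_pos rfl]
      rw [inv_mul_cancel_left₀ hμn, sub_self, norm_zero]
      positivity
    · rw [if_neg h, sub_zero, norm_mul, norm_mul, norm_inv, norm_pow, norm_pow]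
      have hle : ‖(lam i : ℂ)‖ ≤ r :=
        hbound (lam i) (hT.hasEigenvalue_eigenvalues hrank i) h
      calc (‖μ‖ ^ n)⁻¹ * (‖(lam i : ℂ)‖ ^ n * ‖b.repr ψ i‖)
          ≤ (‖μ‖ ^ n)⁻¹ * (r ^ n * ‖b.repr ψ i‖) := by
            gcongr
        _ = (r / ‖μ‖) ^ n * ‖b.repr ψ i‖ := by rw [div_pow]; ring
  calc ‖(μ ^ n)⁻¹ • (T ^ n) ψ - v‖ = ‖b.repr ((μ ^ n)⁻¹ • (T ^ n) ψ - v)‖ :=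
        (b.repr.norm_map _).symm
    _ ≤ (r / ‖μ‖) ^ n * ‖b.repr ψ‖ :=
        euclid_norm_le _ _ _ (by positivity) key
    _ = (r / ‖μ‖) ^ n * ‖ψ‖ := by rw [b.repr.norm_map]
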